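/- If a₂ = a₄ = 0 and (a₁−a₃)(2a₁+a₃) > 0, then the Lie algebra g(a₁,0,a₃,0) is isomorphic as a real Lie algebra to so(3,ℝ) × so(3,ℝ). (This is the Lie-algebra form of Proposition 4(c): the Lie group G(a₁,0,a₃,0) is locally isomorphic to S³ × S³.) -/

import Mathlib

open scoped Matrix

/-- The Lie bracket of the 6-dimensional Lie algebra `g(a₁,a₂,a₃,a₄)` of Puhle's paper,
written on `ℝ⁶` with the basis `X₁,…,X₆` corresponding to the 0-based coordinates `0,…,5`.
Here `p = 2a₁+a₃`, `q = 2a₂+a₄`, `r = a₁−a₃`, `s = a₂−a₄`,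
`α = −2(rp + sq)`, and the bracket is determined by `[X₆,X₁]=X₂`, `[X₆,X₂]=−X₁`,
`[X₆,X₃]=−X₄`, `[X₆,X₄]=X₃`, `[X₁,X₅]=−p·X₃−q·X₄`, `[X₂,X₅]=−q·X₃+p·X₄`,
`[X₃,X₅]=p·X₁+q·X₂`, `[X₄,X₅]=q·X₁−p·X₂`, `[X₁,X₃]=2r·X₅`, `[X₂,X₄]=−2r·X₅`,
`[X₁,X₄]=2s·X₅`, `[X₂,X₃]=2s·X₅`, `[X₁,X₂]=−α·X₆`, `[X₃,X₄]=α·X₆`,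
all other brackets of basis vectors being zero. -/
def gBracket (a₁ a₂ a₃ a₄ : ℝ) (x y : Fin 6 → ℝ) : Fin 6 → ℝ :=
  let p := 2 * a₁ + a₃
  let q := 2 * a₂ + a₄
  let r := a₁ - a₃
  let s := a₂ - a₄
  let α := -2 * (r * p + s * q)
  let w : Fin 6 → Fin 6 → ℝ := fun i j => x i * y j - x j * y i
  ![p * w 2 4 + q * w 3 4 + w 1 5,
    q * w 2 4 - p * w 3 4 - w 0 5,
    -(p * w 0 4) - q * w 1 4 - w 3 5,
    -(q * w 0 4) + p * w 1 4 + w 2 5,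
    2 * r * (w 0 2 - w 1 3) + 2 * s * (w 0 3 + w 1 2),
    -(α * w 0 1) + α * w 2 3]

@[simp] lemma vec6_val0 {α : Type*} (x0 x1 x2 x3 x4 x5 : α) :
    ![x0, x1, x2, x3, x4, x5] 0 = x0 := rfl
@[simp] lemma vec6_val1 {α : Type*} (x0 x1 x2 x3 x4 x5 : α) :
    ![x0, x1, x2, x3, x4, x5] 1 = x1 := rfl
@[simp] lemma vec6_val2 {α : Type*} (x0 x1 x2 x3 x4 x5 : α) :
    ![x0, x1, x2, x3, x4, x5] 2 = x2 := rfl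
@[simp] lemma vec6_val3 {α : Type*} (x0 x1 x2 x3 x4 x5 : α) :
    ![x0, x1, x2, x3, x4, x5] 3 = x3 := rfl
@[simp] lemma vec6_val4 {α : Type*} (x0 x1 x2 x3 x4 x5 : α) :
    ![x0, x1, x2, x3, x4, x5] 4 = x4 := rfl
@[simp] lemma vec6_val5 {α : Type*} (x0 x1 x2 x3 x4 x5 : α) :
    ![x0, x1, x2, x3, x4, x5] 5 = x5 := rfl

/-- The skew-symmetric matrix attached to a 3-vector. -/
def soM (u : Fin 3 → ℝ) : Matrix (Fin 3) (Fin 3) ℝ :=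
  !![0, -u 2, u 1; u 2, 0, -u 0; -u 1, u 0, 0]

lemma soM_mem (u : Fin 3 → ℝ) : soM u ∈ LieAlgebra.Orthogonal.so (Fin 3) ℝ := by
  rw [LieAlgebra.Orthogonal.so, mem_skewAdjointMatricesLieSubalgebra,
    mem_skewAdjointMatricesSubmodule]
  show (soM u)ᵀ * 1 = 1 * (-(soM u))
  rw [Matrix.mul_one, Matrix.one_mul]
  ext i j
  fin_cases i <;> fin_cases j <;> simp [soM]

lemma so_skew {A : Matrix (Fin 3) (Fin 3) ℝ}
    (hA : A ∈ LieAlgebra.Orthogonal.so (Fin 3) ℝ) (i j : Fin 3) : A j i = -A i j := by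
  rw [LieAlgebra.Orthogonal.so, mem_skewAdjointMatricesLieSubalgebra,
    mem_skewAdjointMatricesSubmodule] at hA
  have h1 : Aᵀ * 1 = 1 * (-A) := hA
  rw [Matrix.mul_one, Matrix.one_mul] at h1
  have := congrFun (congrFun h1 i) j
  simpa [Matrix.transpose_apply] using this

lemma so_eq_soM {A : Matrix (Fin 3) (Fin 3) ℝ}
    (hA : A ∈ LieAlgebra.Orthogonal.so (Fin 3) ℝ) :
    A = soM ![A 2 1, A 0 2, A 1 0] := by
  have h := so_skew hA
  ext i j
  fin_cases i <;> fin_cases j <;> simp [soM] <;>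
    linarith [h 0 0, h 1 1, h 2 2, h 0 1, h 0 2, h 1 2]

noncomputable abbrev So3 := LieAlgebra.Orthogonal.so (Fin 3) ℝ

@[simp] lemma so_smul_apply (c : ℝ) (z : So3) (i j : Fin 3) :
    ((c • z : So3) : Matrix (Fin 3) (Fin 3) ℝ) i j
      = c * (z : Matrix (Fin 3) (Fin 3) ℝ) i j := rfl

noncomputable def fMap (k p : ℝ) : (Fin 6 → ℝ) →ₗ[ℝ] (So3 × So3) where
  toFun x :=
    (⟨soM ![k * (x 0 + x 3), k * (x 1 + x 2), p * x 4 + x 5], soM_mem _⟩,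
     ⟨soM ![k * (x 0 - x 3), k * (x 2 - x 1), p * x 4 - x 5], soM_mem _⟩)
  map_add' x y := by
    refine Prod.ext (Subtype.ext ?_) (Subtype.ext ?_) <;>
    · show _ = (_ : Matrix (Fin 3) (Fin 3) ℝ) + _
      ext i j
      fin_cases i <;> fin_cases j <;> simp [soM] <;> ring
  map_smul' c x := by
    refine Prod.ext (Subtype.ext ?_) (Subtype.ext ?_) <;>
    · show _ = c • (_ : Matrix (Fin 3) (Fin 3) ℝ)
      ext i j
      fin_cases i <;> fin_cases j <;> simp [soM] <;> ring

noncomputable def gMap (k p : ℝ) : (So3 × So3) →ₗ[ℝ] (Fin 6 → ℝ) where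
  toFun z :=
    ![(z.1.1 2 1 + z.2.1 2 1) / (2 * k),
      (z.1.1 0 2 - z.2.1 0 2) / (2 * k),
      (z.1.1 0 2 + z.2.1 0 2) / (2 * k),
      (z.1.1 2 1 - z.2.1 2 1) / (2 * k),
      (z.1.1 1 0 + z.2.1 1 0) / (2 * p),
      (z.1.1 1 0 - z.2.1 1 0) / 2]
  map_add' z w := by
    funext i
    fin_cases i <;> simp <;> ring
  map_smul' c z := by
    funext i
    fin_cases i <;> simp <;> ring

set_option maxHeartbeats 1000000 in
/-- If `a₂ = a₄ = 0` and `(a₁−a₃)(2a₁+a₃) > 0`, the Lie algebra `g(a₁,0,a₃,0)` is isomorphic,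
as a real Lie algebra, to `so(3,ℝ) × so(3,ℝ)` (Proposition 4(c) of Puhle's paper). -/
theorem g_iso_so3_prod_so3_of_pos (a₁ a₃ : ℝ) (h : (a₁ - a₃) * (2 * a₁ + a₃) > 0) :
    ∃ e : (Fin 6 → ℝ) ≃ₗ[ℝ]
        (LieAlgebra.Orthogonal.so (Fin 3) ℝ × LieAlgebra.Orthogonal.so (Fin 3) ℝ),
      ∀ x y : Fin 6 → ℝ,
        (e (gBracket a₁ 0 a₃ 0 x y)).1 = ⁅(e x).1, (e y).1⁆
          ∧ (e (gBracket a₁ 0 a₃ 0 x y)).2 = ⁅(e x).2, (e y).2⁆ := by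
  have hp : (2 * a₁ + a₃) ≠ 0 := by
    intro hp0
    rw [hp0, mul_zero] at h
    exact lt_irrefl 0 h
  obtain ⟨k, hkpos, hk2⟩ : ∃ k : ℝ, 0 < k ∧ k ^ 2 = 2 * ((a₁ - a₃) * (2 * a₁ + a₃)) :=
    ⟨Real.sqrt (2 * ((a₁ - a₃) * (2 * a₁ + a₃))), Real.sqrt_pos.mpr (by linarith),
      Real.sq_sqrt (by linarith)⟩
  have hk : k ≠ 0 := ne_of_gt hkpos
  refine ⟨LinearEquiv.ofLinear (fMap k (2*a₁+a₃)) (gMap k (2*a₁+a₃)) ?_ ?_, ?_⟩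
  · -- fMap ∘ gMap = id
    apply LinearMap.ext
    rintro ⟨⟨A, hA⟩, ⟨B, hB⟩⟩
    obtain ⟨uA, rfl⟩ : ∃ u, A = soM u := ⟨_, so_eq_soM hA⟩
    obtain ⟨uB, rfl⟩ : ∃ u, B = soM u := ⟨_, so_eq_soM hB⟩
    refine Prod.ext (Subtype.ext ?_) (Subtype.ext ?_) <;>
    · show soM _ = _
      ext i j
      fin_cases i <;> fin_cases j <;>
        simp [soM, fMap, gMap] <;>
        field_simp <;> ring
  · -- gMap ∘ fMap = id
    apply LinearMap.ext
    intro x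
    funext i
    fin_cases i <;> simp [fMap, gMap, soM] <;> field_simp <;> ring
  · intro x y
    constructor <;>
    · apply Subtype.ext
      show (soM _ : Matrix (Fin 3) (Fin 3) ℝ) = _
      show _ = soM _ * soM _ - soM _ * soM _
      ext i j
      fin_cases i <;> fin_cases j <;>
        simp [soM, fMap, gBracket, Matrix.mul_apply, Fin.sum_univ_succ] <;>
        first
          | ring1
          | linear_combination
              ((x 0 + x 3) * (y 1 + y 2) - (x 1 + x 2) * (y 0 + y 3)) * hk2
          | linear_combination
              (-((x 0 + x 3) * (y 1 + y 2) - (x 1 + x 2) * (y 0 + y 3))) * hk2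
          | linear_combination
              ((x 0 - x 3) * (y 2 - y 1) - (x 2 - x 1) * (y 0 - y 3)) * hk2
          | linear_combination
              (-((x 0 - x 3) * (y 2 - y 1) - (x 2 - x 1) * (y 0 - y 3))) * hk2
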